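/- Let p > 2, q > p - 1, α > 0, M > 0, and let {|Q|}_{Q} be the volumes of dyadic cubes where a cube of side length ℓ(Q) has volume comparable to ℓ(Q)^M. For a nonnegative measure μ and a fixed dyadic cube P, if 0 < ε < αp/((p-1)M), then for every dyadic cube Q ⊂ P, Σ_{Q'⊂Q} μ(Q')^{1/(p-1)} / |Q'|^{(1-αp/M)·1/(p-1) - 1} ≤ C μ(Q)^{1/(p-1)} / |Q|^{(1-αp/M)·1/(p-1) - 1}, where C depends only on p, α, M, ε; the proof uses Hölder's inequality with exponents r' = p-1 and r = (p-1)/(p-2) and the geometric summability of |Q'|^{-r(1-αp/M)/(p-1) + r - rε} over dyadic subcubes of Q. -/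

import Mathlib

open MeasureTheory ENNReal Set

/-- A dyadic cube decomposition of a metric measure space (Sawyer–Wheeden/Christ). -/
structure MetricDyadicGrid (X : Type*) [MetricSpace X] [MeasurableSpace X] (lam : ℝ) where
  ι : Type
  countable : Countable ι
  cube : ι → Set X
  gen : ι → ℤ
  base : ℤ
  base_le : ∀ i, base ≤ gen i
  measurableSet : ∀ i, MeasurableSet (cube i)
  pairwise_disjoint : ∀ i j, i ≠ j → gen i = gen j → Disjoint (cube i) (cube j)
  cover : ∀ k : ℤ, base ≤ k → (⋃ i ∈ {i | gen i = k}, cube i) = Set.univ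
  nested : ∀ i j, gen i ≤ gen j → cube i ⊆ cube j ∨ Disjoint (cube i) (cube j)
  center : ι → X
  ball_subset : ∀ i, Metric.ball (center i) (lam ^ gen i) ⊆ cube i
  subset_ball : ∀ i, cube i ⊆ Metric.ball (center i) (lam ^ (gen i + 1))

private lemma rpow_ne_zero_ne_top {x : ℝ≥0∞} (h0 : x ≠ 0) (ht : x ≠ ∞) (y : ℝ) :
    x ^ y ≠ 0 ∧ x ^ y ≠ ∞ := by
  constructor
  · simp [ENNReal.rpow_eq_zero_iff, h0, ht]
  · simp [ENNReal.rpow_eq_top_iff, h0, ht]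

/-- `exp` into `ℝ≥0∞`, used to transfer `rpow` algebra on `(0,∞)` to real arithmetic. -/
private noncomputable def EE (x : ℝ) : ℝ≥0∞ := ENNReal.ofReal (Real.exp x)

private lemma EE_add (x y : ℝ) : EE x * EE y = EE (x + y) := by
  rw [EE, EE, EE, Real.exp_add, ENNReal.ofReal_mul (Real.exp_nonneg x)]

private lemma EE_rpow (x y : ℝ) : EE x ^ y = EE (x * y) := by
  rw [EE, EE, ENNReal.ofReal_rpow_of_pos (Real.exp_pos x), Real.exp_mul]

private lemma EE_surj {u : ℝ≥0∞} (h0 : u ≠ 0) (ht : u ≠ ∞) : ∃ x, EE x = u :=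
  ⟨Real.log u.toReal, by
    rw [EE, Real.exp_log (ENNReal.toReal_pos h0 ht), ENNReal.ofReal_toReal ht]⟩

/-- Young-type inequality used in place of Hölder's inequality. -/
private lemma young_enn {th sg : ℝ} (hθ : 0 < th) (hσ : 0 < sg) (hθσ : th + sg = 1) (gm : ℝ)
    {a b s : ℝ≥0∞} (ha : a ≠ ∞) (hb0 : b ≠ 0) (hbt : b ≠ ∞) (hs0 : s ≠ 0) (hst : s ≠ ∞) :
    a ^ th * b ^ gm ≤ a * s + b ^ (gm / sg) * s ^ (-(th / sg)) := by
  rcases eq_or_ne a 0 with rfl | ha0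
  · rw [ENNReal.zero_rpow_of_pos hθ, zero_mul]; exact zero_le
  have key : a ^ th * b ^ gm = (a * s) ^ th * (b ^ (gm / sg) * s ^ (-(th / sg))) ^ sg := by
    obtain ⟨x, rfl⟩ := EE_surj ha0 ha
    obtain ⟨y, rfl⟩ := EE_surj hb0 hbt
    obtain ⟨z, rfl⟩ := EE_surj hs0 hst
    simp only [EE_rpow, EE_add]
    congr 1
    field_simp
    ring
  rw [key]
  set Y := b ^ (gm / sg) * s ^ (-(th / sg)) with hY
  calc (a * s) ^ th * Y ^ sg
      ≤ (max (a * s) Y) ^ th * (max (a * s) Y) ^ sg :=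
        mul_le_mul' (ENNReal.rpow_le_rpow (le_max_left _ _) hθ.le)
          (ENNReal.rpow_le_rpow (le_max_right _ _) hσ.le)
    _ = (max (a * s) Y) ^ (th + sg) := (ENNReal.rpow_add_of_nonneg _ _ hθ.le hσ.le).symm
    _ = max (a * s) Y := by rw [hθσ, ENNReal.rpow_one]
    _ ≤ a * s + Y := max_le le_self_add le_add_self

/-- The `rpow` algebra for the second Young term. -/
private lemma alg_enn {u v b : ℝ≥0∞} (hu0 : u ≠ 0) (hut : u ≠ ∞) (hv0 : v ≠ 0) (hvt : v ≠ ∞)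
    (hb0 : b ≠ 0) (hbt : b ≠ ∞) {th sg gm d : ℝ} (hsg0 : sg ≠ 0) (hsg : sg = 1 - th)
    (hd : d = gm / sg - 1) (e1 e2 : ℝ) :
    (v * b ^ e1) ^ d * v ^ (1:ℝ) * (u ^ (th - 1) * (v ^ gm * b ^ e2)) ^ (-(th / sg)) =
      u ^ th * (v ^ gm * b ^ (e1 * d - e2 * (th / sg))) := by
  obtain ⟨x, rfl⟩ := EE_surj hu0 hut
  obtain ⟨y, rfl⟩ := EE_surj hv0 hvt
  obtain ⟨z, rfl⟩ := EE_surj hb0 hbt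
  simp only [EE_rpow, EE_add]
  congr 1
  subst hsg hd
  field_simp
  ring

/-- The Hölder-inequality step in the proof of the comparability of `B_2` and `B_3`
(case `p > 2`): the sum `Σ_{Q'⊂Q} μ(Q')^{1/(p-1)} / |Q'|^{(1-αp/M)/(p-1) - 1}` is
dominated by the corresponding single term for `Q`. -/
theorem stmt_1 (M α p q lam ε : ℝ) (c : ℝ≥0∞) (hα : 0 < α) (hp : 2 < p) (hq : p - 1 < q)
    (hM : 0 < M) (hlam : lam = 8) (hc : 0 < c) (hc' : c < ∞)
    (hε : 0 < ε) (hε' : ε < α * p / ((p - 1) * M)) :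
    ∃ C : ℝ≥0∞, 0 < C ∧ C < ∞ ∧
      ∀ (G : Type) (_ : MetricSpace G) (m : MeasurableSpace G) (_ : BorelSpace G)
        (vol : Measure G)
        (_ : ∀ (x : G) (R : ℝ), 0 < R → vol (Metric.ball x R) = c * ENNReal.ofReal (R ^ M))
        (D : MetricDyadicGrid G lam) (P : D.ι) (μ : Measure G)
        (Q : D.ι), D.cube Q ⊆ D.cube P →
        ∑' Q' : {Q' : D.ι // D.cube Q' ⊆ D.cube Q},
            (μ (D.cube Q'.1)) ^ (1 / (p - 1)) /
              (vol (D.cube Q'.1)) ^ ((1 - α * p / M) * (1 / (p - 1)) - 1) ≤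
          C * ((μ (D.cube Q)) ^ (1 / (p - 1)) /
            (vol (D.cube Q)) ^ ((1 - α * p / M) * (1 / (p - 1)) - 1)) := by
  subst hlam
  have hp1 : (0:ℝ) < p - 1 := by linarith
  set th : ℝ := 1 / (p - 1) with hthdef
  have hθpos : 0 < th := by rw [hthdef]; positivity
  have hθlt : th < 1 := by rw [hthdef, div_lt_one hp1]; linarith
  set sg : ℝ := 1 - th with hsgdef
  have hσpos : 0 < sg := by rw [hsgdef]; linarith
  have hapM : 0 < α * p / M := by positivity
  set gm : ℝ := 1 - (1 - α * p / M) * th with hgmdef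
  have hγpos : 0 < gm := by
    rw [hgmdef]
    nlinarith [mul_pos hθpos hapM]
  set d : ℝ := gm / sg - 1 with hddef
  have hsglt : sg < gm := by
    have h3 : 0 < th * (α * p / M) := mul_pos hθpos hapM
    rw [hgmdef, hsgdef]
    nlinarith [h3]
  have hdpos : 0 < d := by
    have h2 : 1 < gm / sg := (one_lt_div hσpos).2 hsglt
    rw [hddef]
    linarith
  set B : ℝ≥0∞ := ENNReal.ofReal ((8:ℝ) ^ M) with hBdef
  have h8M : (1:ℝ) < (8:ℝ) ^ M :=
    (Real.one_lt_rpow_iff_of_pos (by norm_num)).2 (Or.inl ⟨by norm_num, hM⟩)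
  have hB1 : 1 < B := by rw [hBdef]; exact ENNReal.one_lt_ofReal.2 h8M
  have hBtop : B ≠ ∞ := ENNReal.ofReal_ne_top
  have hB0 : B ≠ 0 := (zero_lt_one.trans hB1).ne'
  set w : ℝ := -(d * sg / (2 * th)) with hwdef
  have hw : w < 0 := by
    rw [hwdef]
    exact neg_lt_zero.2 (div_pos (mul_pos hdpos hσpos) (by linarith))
  set ρ : ℝ≥0∞ := B ^ w with hρdef
  set ρ2 : ℝ≥0∞ := B ^ (-(d / 2)) with hρ2def
  have hρlt : ρ < 1 := by
    rw [hρdef]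
    calc B ^ w < B ^ (0:ℝ) := ENNReal.rpow_lt_rpow_of_exponent_lt hB1 hBtop hw
      _ = 1 := ENNReal.rpow_zero
  have hρ2lt : ρ2 < 1 := by
    rw [hρ2def]
    calc B ^ (-(d/2)) < B ^ (0:ℝ) :=
          ENNReal.rpow_lt_rpow_of_exponent_lt hB1 hBtop (neg_lt_zero.2 (half_pos hdpos))
      _ = 1 := ENNReal.rpow_zero
  set Cc : ℝ≥0∞ := (1 - ρ)⁻¹ + B ^ (2*d) * (1 - ρ2)⁻¹ with hCcdef
  have h1ρt : (1:ℝ≥0∞) - ρ ≠ ∞ := (lt_of_le_of_lt tsub_le_self one_lt_top).ne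
  have hCc0 : Cc ≠ 0 := by
    rw [hCcdef]
    intro h
    rw [add_eq_zero] at h
    exact (ENNReal.inv_ne_zero.2 h1ρt) h.1
  have hCct : Cc ≠ ∞ := by
    rw [hCcdef]
    apply ENNReal.add_ne_top.2
    constructor
    · rw [ENNReal.inv_ne_top]
      exact (tsub_pos_of_lt hρlt).ne'
    · exact ENNReal.mul_ne_top (rpow_ne_zero_ne_top hB0 hBtop _).2
        (by rw [ENNReal.inv_ne_top]; exact (tsub_pos_of_lt hρ2lt).ne')
  refine ⟨Cc, zero_lt_iff.2 hCc0, hCct.lt_top, ?_⟩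
  intro G instMS m instB vol hvol D P μ Q hsub
  haveI : Countable D.ι := D.countable
  have hexp : (1 - α * p / M) * th - 1 = -gm := by rw [hgmdef]; ring
  rw [hexp]
  simp only [ENNReal.rpow_neg, div_eq_mul_inv, inv_inv]
  -- basic volume estimates
  have hWB : ∀ k : ℤ, ENNReal.ofReal (((8:ℝ) ^ k) ^ M) = B ^ (k : ℝ) := by
    intro k
    rw [hBdef, ENNReal.ofReal_rpow_of_pos (by positivity)]
    congr 1
    rw [← Real.rpow_intCast (8:ℝ) k, ← Real.rpow_mul (by norm_num),
      ← Real.rpow_mul (by norm_num), mul_comm]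
  have hVlow : ∀ i : D.ι, c * B ^ (D.gen i : ℝ) ≤ vol (D.cube i) := by
    intro i
    rw [← hWB, ← hvol (D.center i) _ (by positivity)]
    exact measure_mono (D.ball_subset i)
  have hVhigh : ∀ i : D.ι, vol (D.cube i) ≤ c * B ^ ((D.gen i : ℝ) + 1) := by
    intro i
    have e : ((D.gen i : ℝ) + 1) = ((D.gen i + 1 : ℤ) : ℝ) := by push_cast; ring
    rw [e, ← hWB, ← hvol (D.center i) _ (by positivity)]
    exact measure_mono (D.subset_ball i)
  have hcB0 : ∀ x : ℝ, c * B ^ x ≠ 0 :=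
    fun x => mul_ne_zero hc.ne' (rpow_ne_zero_ne_top hB0 hBtop x).1
  have hcBt : ∀ x : ℝ, c * B ^ x ≠ ∞ :=
    fun x => ENNReal.mul_ne_top hc'.ne (rpow_ne_zero_ne_top hB0 hBtop x).2
  have hvol0 : ∀ i, vol (D.cube i) ≠ 0 :=
    fun i => (lt_of_lt_of_le (zero_lt_iff.2 (hcB0 _)) (hVlow i)).ne'
  have hvolt : ∀ i, vol (D.cube i) ≠ ∞ :=
    fun i => ((hVhigh i).trans_lt (hcBt _).lt_top).ne
  -- trivial cases
  rcases eq_or_ne (μ (D.cube Q)) ∞ with hμt | hμt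
  · rw [hμt, ENNReal.top_rpow_of_pos hθpos,
      ENNReal.top_mul ((rpow_ne_zero_ne_top (hvol0 Q) (hvolt Q) gm).1),
      ENNReal.mul_top hCc0]
    exact le_top
  rcases eq_or_ne (μ (D.cube Q)) 0 with hμ0 | hμ0
  · have hz : ∀ Q' : {Q' : D.ι // D.cube Q' ⊆ D.cube Q},
        μ (D.cube Q'.1) ^ th * vol (D.cube Q'.1) ^ gm = 0 := by
      intro t
      have : μ (D.cube t.1) = 0 := le_antisymm (hμ0 ▸ measure_mono t.2) (zero_le)
      rw [this, ENNReal.zero_rpow_of_pos hθpos, zero_mul]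
    rw [ENNReal.tsum_eq_zero.2 hz]
    exact zero_le
  -- main case : 0 < μ Q < ∞
  set k0 : ℤ := D.gen Q + 1 with hk0
  have hgenle : ∀ i : D.ι, D.cube i ⊆ D.cube Q → D.gen i ≤ k0 := by
    intro i hi
    by_contra hgt
    push_neg at hgt
    have hgr : (D.gen Q : ℝ) + 1 < (D.gen i : ℝ) := by
      have : D.gen Q + 1 < D.gen i := by omega
      exact_mod_cast this
    have h1 : c * B ^ ((D.gen Q : ℝ) + 1) < c * B ^ ((D.gen i : ℝ)) := by
      exact ENNReal.mul_lt_mul_right hc.ne' hc'.ne (ENNReal.rpow_lt_rpow_of_exponent_lt hB1 hBtop hgr)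
    exact absurd ((hVlow i).trans ((measure_mono hi).trans (hVhigh Q))) h1.not_ge
  have hinner : ∀ n : ℕ,
      (∑' t : (fun t : {Q' : D.ι // D.cube Q' ⊆ D.cube Q} =>
          (k0 - D.gen t.1).toNat) ⁻¹' {n},
        μ (D.cube t.1.1) ^ th * vol (D.cube t.1.1) ^ gm)
      ≤ μ (D.cube Q) ^ th * vol (D.cube Q) ^ gm * ρ ^ n
        + μ (D.cube Q) ^ th * vol (D.cube Q) ^ gm * (B ^ (2*d) * ρ2 ^ n) := by
    intro n
    have hfib : ∀ t : (fun t : {Q' : D.ι // D.cube Q' ⊆ D.cube Q} =>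
        (k0 - D.gen t.1).toNat) ⁻¹' {n}, D.gen t.1.1 = k0 - (n:ℤ) := by
      intro t
      have h1 := t.2
      simp only [Set.mem_preimage, Set.mem_singleton_iff] at h1
      have h2 := hgenle t.1.1 t.1.2
      omega
    have hdisj : Pairwise (Function.onFun Disjoint
        (fun t : (fun t : {Q' : D.ι // D.cube Q' ⊆ D.cube Q} =>
          (k0 - D.gen t.1).toNat) ⁻¹' {n} => D.cube t.1.1)) := by
      intro t t' htne
      exact D.pairwise_disjoint _ _ (fun h => htne (Subtype.ext (Subtype.ext h)))
        ((hfib t).trans (hfib t').symm)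
    have hμsum : (∑' t : (fun t : {Q' : D.ι // D.cube Q' ⊆ D.cube Q} =>
        (k0 - D.gen t.1).toNat) ⁻¹' {n}, μ (D.cube t.1.1)) ≤ μ (D.cube Q) := by
      rw [← measure_iUnion hdisj (fun t => D.measurableSet _)]
      exact measure_mono (Set.iUnion_subset fun t => t.1.2)
    have hvsum : (∑' t : (fun t : {Q' : D.ι // D.cube Q' ⊆ D.cube Q} =>
        (k0 - D.gen t.1).toNat) ⁻¹' {n}, vol (D.cube t.1.1)) ≤ vol (D.cube Q) := by
      rw [← measure_iUnion hdisj (fun t => D.measurableSet _)]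
      exact measure_mono (Set.iUnion_subset fun t => t.1.2)
    have hvolup : ∀ t : (fun t : {Q' : D.ι // D.cube Q' ⊆ D.cube Q} =>
        (k0 - D.gen t.1).toNat) ⁻¹' {n},
        vol (D.cube t.1.1) ≤ vol (D.cube Q) * B ^ (2 - (n:ℝ)) := by
      intro t
      calc vol (D.cube t.1.1) ≤ c * B ^ ((D.gen t.1.1 : ℝ) + 1) := hVhigh _
        _ = c * B ^ ((D.gen Q : ℝ)) * B ^ (2 - (n:ℝ)) := by
            rw [mul_assoc, ← ENNReal.rpow_add _ _ hB0 hBtop]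
            congr 2
            rw [hfib t, hk0]
            push_cast
            ring
        _ ≤ vol (D.cube Q) * B ^ (2 - (n:ℝ)) := mul_le_mul_left (hVlow Q) _
    set sn : ℝ≥0∞ := μ (D.cube Q) ^ (th - 1) *
      (vol (D.cube Q) ^ gm * B ^ (w * (n:ℝ))) with hsn
    have hsn0 : sn ≠ 0 := by
      rw [hsn]
      exact mul_ne_zero (rpow_ne_zero_ne_top hμ0 hμt _).1
        (mul_ne_zero (rpow_ne_zero_ne_top (hvol0 Q) (hvolt Q) _).1
          (rpow_ne_zero_ne_top hB0 hBtop _).1)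
    have hsnt : sn ≠ ∞ := by
      rw [hsn]
      exact ENNReal.mul_ne_top (rpow_ne_zero_ne_top hμ0 hμt _).2
        (ENNReal.mul_ne_top (rpow_ne_zero_ne_top (hvol0 Q) (hvolt Q) _).2
          (rpow_ne_zero_ne_top hB0 hBtop _).2)
    have hterm : ∀ t : (fun t : {Q' : D.ι // D.cube Q' ⊆ D.cube Q} =>
        (k0 - D.gen t.1).toNat) ⁻¹' {n},
        μ (D.cube t.1.1) ^ th * vol (D.cube t.1.1) ^ gm ≤
          μ (D.cube t.1.1) * sn + vol (D.cube t.1.1) ^ (gm / sg) * sn ^ (-(th / sg)) :=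
      fun t => young_enn hθpos hσpos (by rw [hsgdef]; ring) gm
        (ne_top_of_le_ne_top hμt (measure_mono t.1.2)) (hvol0 _) (hvolt _) hsn0 hsnt
    have hvv : (∑' t : (fun t : {Q' : D.ι // D.cube Q' ⊆ D.cube Q} =>
        (k0 - D.gen t.1).toNat) ⁻¹' {n}, vol (D.cube t.1.1) ^ (gm / sg))
        ≤ (vol (D.cube Q) * B ^ (2 - (n:ℝ))) ^ d * vol (D.cube Q) ^ (1:ℝ) := by
      calc (∑' t : (fun t : {Q' : D.ι // D.cube Q' ⊆ D.cube Q} =>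
            (k0 - D.gen t.1).toNat) ⁻¹' {n}, vol (D.cube t.1.1) ^ (gm / sg))
          = ∑' t : (fun t : {Q' : D.ι // D.cube Q' ⊆ D.cube Q} =>
            (k0 - D.gen t.1).toNat) ⁻¹' {n}, vol (D.cube t.1.1) ^ d * vol (D.cube t.1.1) := by
            refine tsum_congr fun t => ?_
            have hds : gm / sg = d + 1 := by rw [hddef]; ring
            rw [hds, ENNReal.rpow_add_of_nonneg _ _ hdpos.le zero_le_one, ENNReal.rpow_one]
        _ ≤ ∑' t : (fun t : {Q' : D.ι // D.cube Q' ⊆ D.cube Q} =>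
            (k0 - D.gen t.1).toNat) ⁻¹' {n},
              (vol (D.cube Q) * B ^ (2 - (n:ℝ))) ^ d * vol (D.cube t.1.1) :=
            ENNReal.tsum_le_tsum fun t =>
              mul_le_mul_left (ENNReal.rpow_le_rpow (hvolup t) hdpos.le) _
        _ = (vol (D.cube Q) * B ^ (2 - (n:ℝ))) ^ d *
            ∑' t : (fun t : {Q' : D.ι // D.cube Q' ⊆ D.cube Q} =>
              (k0 - D.gen t.1).toNat) ⁻¹' {n}, vol (D.cube t.1.1) := ENNReal.tsum_mul_left
        _ ≤ (vol (D.cube Q) * B ^ (2 - (n:ℝ))) ^ d * vol (D.cube Q) ^ (1:ℝ) := by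
            rw [ENNReal.rpow_one]
            exact mul_le_mul_right hvsum _
    calc (∑' t : (fun t : {Q' : D.ι // D.cube Q' ⊆ D.cube Q} =>
          (k0 - D.gen t.1).toNat) ⁻¹' {n},
          μ (D.cube t.1.1) ^ th * vol (D.cube t.1.1) ^ gm)
        ≤ ∑' t : (fun t : {Q' : D.ι // D.cube Q' ⊆ D.cube Q} =>
          (k0 - D.gen t.1).toNat) ⁻¹' {n},
          (μ (D.cube t.1.1) * sn + vol (D.cube t.1.1) ^ (gm / sg) * sn ^ (-(th / sg))) :=
          ENNReal.tsum_le_tsum hterm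
      _ = (∑' t : (fun t : {Q' : D.ι // D.cube Q' ⊆ D.cube Q} =>
          (k0 - D.gen t.1).toNat) ⁻¹' {n}, μ (D.cube t.1.1)) * sn
          + (∑' t : (fun t : {Q' : D.ι // D.cube Q' ⊆ D.cube Q} =>
          (k0 - D.gen t.1).toNat) ⁻¹' {n}, vol (D.cube t.1.1) ^ (gm / sg)) * sn ^ (-(th / sg)) := by
          rw [ENNReal.tsum_add, ENNReal.tsum_mul_right, ENNReal.tsum_mul_right]
      _ ≤ μ (D.cube Q) * sn
          + (vol (D.cube Q) * B ^ (2 - (n:ℝ))) ^ d * vol (D.cube Q) ^ (1:ℝ) * sn ^ (-(th / sg)) :=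
          add_le_add (mul_le_mul_left hμsum _) (mul_le_mul_left hvv _)
      _ = μ (D.cube Q) ^ th * (vol (D.cube Q) ^ gm * B ^ (w * (n:ℝ)))
          + μ (D.cube Q) ^ th * (vol (D.cube Q) ^ gm *
            B ^ ((2 - (n:ℝ)) * d - w * (n:ℝ) * (th / sg))) := by
          rw [hsn]
          congr 1
          · rw [← mul_assoc]
            congr 1
            nth_rewrite 1 [← ENNReal.rpow_one (μ (D.cube Q))]
            rw [← ENNReal.rpow_add _ _ hμ0 hμt]
            congr 1
            ring
          · exact alg_enn hμ0 hμt (hvol0 Q) (hvolt Q) hB0 hBtop hσpos.ne' hsgdef hddef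
              (2 - (n:ℝ)) (w * (n:ℝ))
      _ = μ (D.cube Q) ^ th * vol (D.cube Q) ^ gm * ρ ^ n
          + μ (D.cube Q) ^ th * vol (D.cube Q) ^ gm * (B ^ (2*d) * ρ2 ^ n) := by
          have e1 : B ^ (w * (n:ℝ)) = ρ ^ n := by
            rw [hρdef, ← ENNReal.rpow_natCast (B ^ w) n, ← ENNReal.rpow_mul]
          have e2 : B ^ ((2 - (n:ℝ)) * d - w * (n:ℝ) * (th / sg)) = B ^ (2*d) * ρ2 ^ n := by
            have he : (2 - (n:ℝ)) * d - w * (n:ℝ) * (th / sg) = 2*d + (-(d/2)) * (n:ℝ) := by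
              rw [hwdef]
              field_simp
              ring
            have h2n : ρ2 ^ n = B ^ ((-(d/2)) * (n:ℝ)) := by
              rw [hρ2def, ← ENNReal.rpow_natCast (B ^ (-(d/2))) n, ← ENNReal.rpow_mul]
            rw [he, ENNReal.rpow_add _ _ hB0 hBtop, h2n]
          rw [e1, e2]
          ring
  calc (∑' Q' : {Q' : D.ι // D.cube Q' ⊆ D.cube Q},
        μ (D.cube Q'.1) ^ th * vol (D.cube Q'.1) ^ gm)
      = ∑' n : ℕ, ∑' t : (fun t : {Q' : D.ι // D.cube Q' ⊆ D.cube Q} =>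
          (k0 - D.gen t.1).toNat) ⁻¹' {n},
          μ (D.cube t.1.1) ^ th * vol (D.cube t.1.1) ^ gm :=
        (ENNReal.tsum_fiberwise (fun Q' : {Q' : D.ι // D.cube Q' ⊆ D.cube Q} =>
          μ (D.cube Q'.1) ^ th * vol (D.cube Q'.1) ^ gm)
          (fun t => (k0 - D.gen t.1).toNat)).symm
    _ ≤ ∑' n : ℕ, (μ (D.cube Q) ^ th * vol (D.cube Q) ^ gm * ρ ^ n
          + μ (D.cube Q) ^ th * vol (D.cube Q) ^ gm * (B ^ (2*d) * ρ2 ^ n)) :=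
        ENNReal.tsum_le_tsum hinner
    _ = μ (D.cube Q) ^ th * vol (D.cube Q) ^ gm * (1 - ρ)⁻¹
          + μ (D.cube Q) ^ th * vol (D.cube Q) ^ gm * (B ^ (2*d) * (1 - ρ2)⁻¹) := by
        rw [ENNReal.tsum_add, ENNReal.tsum_mul_left, ENNReal.tsum_mul_left,
          ENNReal.tsum_mul_left, ENNReal.tsum_geometric, ENNReal.tsum_geometric]
    _ = Cc * (μ (D.cube Q) ^ th * vol (D.cube Q) ^ gm) := by
        rw [hCcdef]
        ring
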